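/- Let G be a Garside group, r a natural number, p, q ∈ ℤ^r, and a, c ∈ [p,q]. Then a and c are conjugate in G if and only if c belongs to the smallest subset W of [p,q] containing a that is closed under the following operation: whenever v ∈ W, s ∈ S, and v^s ∈ [p,q], then v^s ∈ W. (Correctness of the basic algorithm computing a^G ∩ [p,q], which solves the Simultaneous Conjugacy Problem in Garside groups.) -/

import Mathlib

/-- A Garside structure on a group `G`: a submonoid `G⁺` of positive elements
together with a Garside element `Δ`, satisfying the Garside axioms. -/
structure GarsideStructure (G : Type*) [Group G] where
  /-- the monoid `G⁺` of positive elements -/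
  pos : Submonoid G
  /-- the Garside element `Δ` -/
  Δ : G
  delta_mem : Δ ∈ pos
  /-- `G⁺` is Noetherian -/
  noetherian : ∀ a ∈ pos, ∃ n : ℕ, ∀ l : List G,
    (∀ x ∈ l, x ∈ pos ∧ x ≠ 1) → l.prod = a → l.length ≤ n
  /-- any two elements of `G⁺` admit a least common right multiple (w.r.t. `≼`) -/
  lcm_right : ∀ a ∈ pos, ∀ b ∈ pos, ∃ m ∈ pos,
    a⁻¹ * m ∈ pos ∧ b⁻¹ * m ∈ pos ∧
      ∀ c ∈ pos, a⁻¹ * c ∈ pos → b⁻¹ * c ∈ pos → m⁻¹ * c ∈ pos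
  /-- any two elements of `G⁺` admit a least common left multiple (w.r.t. `≽`) -/
  lcm_left : ∀ a ∈ pos, ∀ b ∈ pos, ∃ m ∈ pos,
    m * a⁻¹ ∈ pos ∧ m * b⁻¹ ∈ pos ∧
      ∀ c ∈ pos, c * a⁻¹ ∈ pos → c * b⁻¹ ∈ pos → c * m⁻¹ ∈ pos
  /-- `G` is the group of fractions of `G⁺` -/
  fractions : ∀ g : G, ∃ a ∈ pos, ∃ b ∈ pos, g = a⁻¹ * b
  /-- `Δ` is balanced: its left divisors in `G⁺` coincide with its right divisors -/
  balanced : ∀ s ∈ pos, (s⁻¹ * Δ ∈ pos ↔ Δ * s⁻¹ ∈ pos)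
  /-- the set of simple elements (divisors of `Δ`) is finite -/
  simples_finite : {s : G | s ∈ pos ∧ s⁻¹ * Δ ∈ pos}.Finite
  /-- the simple elements generate `G⁺` -/
  simples_generate : Submonoid.closure {s : G | s ∈ pos ∧ s⁻¹ * Δ ∈ pos} = pos

namespace GarsideStructure

variable {G : Type*} [Group G]

/-- `a ≼ b` : left divisibility. -/
def LeftDvd (Γ : GarsideStructure G) (a b : G) : Prop := a⁻¹ * b ∈ Γ.pos

/-- `b ≽ a` : right divisibility. -/
def RightDvd (Γ : GarsideStructure G) (b a : G) : Prop := b * a⁻¹ ∈ Γ.pos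

/-- a simple element: a divisor of `Δ`. -/
def Simple (Γ : GarsideStructure G) (s : G) : Prop := s ∈ Γ.pos ∧ Γ.LeftDvd s Γ.Δ

/-- an atom of `G⁺`. -/
def Atom (Γ : GarsideStructure G) (a : G) : Prop :=
  a ∈ Γ.pos ∧ a ≠ 1 ∧ ∀ b ∈ Γ.pos, ∀ c ∈ Γ.pos, a = b * c → b = 1 ∨ c = 1

/-- the iterated automorphism `τ^k`, where `τ(x) = Δ⁻¹xΔ`; so `τ^k(x) = Δ^(-k) x Δ^k`. -/
def tau (Γ : GarsideStructure G) (k : ℤ) (x : G) : G := Γ.Δ ^ (-k) * x * Γ.Δ ^ k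

/-- `d` is the greatest common left divisor (`∧`) of `a` and `b`. -/
def IsLeftGcd (Γ : GarsideStructure G) (d a b : G) : Prop :=
  d ∈ Γ.pos ∧ Γ.LeftDvd d a ∧ Γ.LeftDvd d b ∧
    ∀ c ∈ Γ.pos, Γ.LeftDvd c a → Γ.LeftDvd c b → Γ.LeftDvd c d

/-- `d` is the greatest common right divisor (`⋀̃`) of `a` and `b`. -/
def IsRightGcd (Γ : GarsideStructure G) (d a b : G) : Prop :=
  d ∈ Γ.pos ∧ Γ.RightDvd a d ∧ Γ.RightDvd b d ∧
    ∀ c ∈ Γ.pos, Γ.RightDvd a c → Γ.RightDvd b c → Γ.RightDvd d c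

/-- membership of a tuple `a ∈ Gʳ` in the interval `[p,q]`:
`pᵢ ≤ inf aᵢ` (i.e. `Δ^pᵢ ≼ aᵢ`) and `sup aᵢ ≤ qᵢ` (i.e. `aᵢ ≼ Δ^qᵢ`) for all `i`. -/
def InInterval (Γ : GarsideStructure G) {r : ℕ} (p q : Fin r → ℤ) (a : Fin r → G) : Prop :=
  ∀ i, Γ.LeftDvd (Γ.Δ ^ (p i)) (a i) ∧ Γ.LeftDvd (a i) (Γ.Δ ^ (q i))

/-- `‖a‖`: the maximal number of atoms in an expression of `a` as a product of atoms. -/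
noncomputable def anorm (Γ : GarsideStructure G) (a : G) : ℕ :=
  sSup {n | ∃ l : List G, (∀ x ∈ l, Γ.Atom x) ∧ l.prod = a ∧ l.length = n}

end GarsideStructure

namespace GarsideStructure

variable {G : Type*} [Group G] (Γ : GarsideStructure G)

/-- `G⁺ ∩ (G⁺)⁻¹ = {1}`. -/
theorem eq_one_of_mem_of_inv_mem {s : G} (hs : s ∈ Γ.pos) (hsi : s⁻¹ ∈ Γ.pos) :
    s = 1 := by
  by_contra hne
  obtain ⟨n, hn⟩ := Γ.noetherian s hs
  have hsi1 : s⁻¹ ≠ 1 := by simpa using hne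
  have := hn (List.replicate (n+1) s⁻¹ ++ List.replicate (n+2) s) ?_ ?_
  · simp at this; omega
  · intro x hx
    rcases List.mem_append.1 hx with h | h <;>
      simp only [List.eq_of_mem_replicate h] <;> exact ⟨by assumption, by assumption⟩
  · simp [List.prod_replicate]
    group

theorem ldvd_trans {a b c : G} (h1 : Γ.LeftDvd a b) (h2 : Γ.LeftDvd b c) :
    Γ.LeftDvd a c := by
  have := mul_mem h1 h2
  simpa [LeftDvd, mul_assoc] using this

/-- conjugation by `Δ` maps simples to simples. -/
theorem conj_delta_simple {s : G} (hs : Γ.Simple s) : Γ.Simple (Γ.Δ⁻¹ * s * Γ.Δ) := by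
  obtain ⟨hsp, hsd⟩ := hs
  -- w = s⁻¹Δ is positive; Δ * w⁻¹ = s ∈ pos, so by balanced, w⁻¹Δ ∈ pos
  set w := s⁻¹ * Γ.Δ with hw
  have hwp : w ∈ Γ.pos := hsd
  have hΔw : Γ.Δ * w⁻¹ ∈ Γ.pos := by
    have : Γ.Δ * w⁻¹ = s := by rw [hw]; group
    rw [this]; exact hsp
  have hwd : w⁻¹ * Γ.Δ ∈ Γ.pos := (Γ.balanced w hwp).2 hΔw
  have h1 : Γ.Δ⁻¹ * s * Γ.Δ = w⁻¹ * Γ.Δ := by rw [hw]; group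
  constructor
  · rw [h1]; exact hwd
  · show (Γ.Δ⁻¹ * s * Γ.Δ)⁻¹ * Γ.Δ ∈ Γ.pos
    have h2 : (Γ.Δ⁻¹ * s * Γ.Δ)⁻¹ * Γ.Δ = Γ.Δ⁻¹ * (s⁻¹ * Γ.Δ) * Γ.Δ := by group
    -- this is τ of the simple element s⁻¹Δ = w; but we need membership in pos only:
    -- apply the first part to the simple element w
    have hws : Γ.Simple w := ⟨hwp, by show w⁻¹ * Γ.Δ ∈ Γ.pos; exact hwd⟩
    -- τ(w) ∈ pos by the same argument applied to w
    have hww : Γ.Δ * (w⁻¹ * Γ.Δ)⁻¹ ∈ Γ.pos := by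
      have : Γ.Δ * (w⁻¹ * Γ.Δ)⁻¹ = w := by group
      rw [this]; exact hwp
    have := (Γ.balanced (w⁻¹ * Γ.Δ) hwd).2 hww
    rw [h2]; show Γ.Δ⁻¹ * w * Γ.Δ ∈ Γ.pos
    have h3 : Γ.Δ⁻¹ * w * Γ.Δ = (w⁻¹ * Γ.Δ)⁻¹ * Γ.Δ := by group
    rw [h3]; exact this

/-- conjugation by `Δ⁻¹` maps simples to simples. -/
theorem conj_delta_inv_simple {s : G} (hs : Γ.Simple s) : Γ.Simple (Γ.Δ * s * Γ.Δ⁻¹) := by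
  obtain ⟨hsp, hsd⟩ := hs
  have hΔs : Γ.Δ * s⁻¹ ∈ Γ.pos := (Γ.balanced s hsp).1 hsd
  set u := Γ.Δ * s⁻¹ with hu
  have hud : u⁻¹ * Γ.Δ ∈ Γ.pos := by
    have : u⁻¹ * Γ.Δ = s := by rw [hu]; group
    rw [this]; exact hsp
  have hΔu : Γ.Δ * u⁻¹ ∈ Γ.pos := (Γ.balanced u hΔs).1 hud
  have h1 : Γ.Δ * s * Γ.Δ⁻¹ = Γ.Δ * u⁻¹ := by rw [hu]; group
  constructor
  · rw [h1]; exact hΔu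
  · show (Γ.Δ * s * Γ.Δ⁻¹)⁻¹ * Γ.Δ ∈ Γ.pos
    have h2 : (Γ.Δ * s * Γ.Δ⁻¹)⁻¹ * Γ.Δ = u := by rw [hu]; group
    rw [h2]; exact hΔs

end GarsideStructure
namespace GarsideStructure

variable {G : Type*} [Group G] (Γ : GarsideStructure G)

theorem conj_delta_mem {u : G} (hu : u ∈ Γ.pos) : Γ.Δ⁻¹ * u * Γ.Δ ∈ Γ.pos := by
  rw [← Γ.simples_generate] at hu
  induction hu using Submonoid.closure_induction with
  | mem x hx => exact (Γ.conj_delta_simple ⟨hx.1, hx.2⟩).1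
  | one => simpa using Submonoid.one_mem _
  | mul x y hx hy ihx ihy =>
      have : Γ.Δ⁻¹ * (x * y) * Γ.Δ = (Γ.Δ⁻¹ * x * Γ.Δ) * (Γ.Δ⁻¹ * y * Γ.Δ) := by group
      rw [this]; exact mul_mem ihx ihy

theorem conj_delta_inv_mem {u : G} (hu : u ∈ Γ.pos) : Γ.Δ * u * Γ.Δ⁻¹ ∈ Γ.pos := by
  rw [← Γ.simples_generate] at hu
  induction hu using Submonoid.closure_induction with
  | mem x hx => exact (Γ.conj_delta_inv_simple ⟨hx.1, hx.2⟩).1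
  | one => simpa using Submonoid.one_mem _
  | mul x y hx hy ihx ihy =>
      have : Γ.Δ * (x * y) * Γ.Δ⁻¹ = (Γ.Δ * x * Γ.Δ⁻¹) * (Γ.Δ * y * Γ.Δ⁻¹) := by group
      rw [this]; exact mul_mem ihx ihy

/-- `τ^k` preserves the positive monoid, for every `k : ℤ`. -/
theorem tau_mem (k : ℤ) {u : G} (hu : u ∈ Γ.pos) : (Γ.Δ ^ k)⁻¹ * u * Γ.Δ ^ k ∈ Γ.pos := by
  induction k using Int.induction_on with
  | zero => simpa using hu
  | succ n ih =>
      have h : (Γ.Δ ^ ((n : ℤ) + 1))⁻¹ * u * Γ.Δ ^ ((n : ℤ) + 1)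
          = Γ.Δ⁻¹ * ((Γ.Δ ^ (n : ℤ))⁻¹ * u * Γ.Δ ^ (n : ℤ)) * Γ.Δ := by
        rw [zpow_add_one]; group
      rw [h]; exact Γ.conj_delta_mem ih
  | pred n ih =>
      have h : (Γ.Δ ^ (-(n : ℤ) - 1))⁻¹ * u * Γ.Δ ^ (-(n : ℤ) - 1)
          = Γ.Δ * ((Γ.Δ ^ (-(n : ℤ)))⁻¹ * u * Γ.Δ ^ (-(n : ℤ))) * Γ.Δ⁻¹ := by
        rw [zpow_sub_one]; group
      rw [h]; exact Γ.conj_delta_inv_mem ih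

end GarsideStructure
namespace GarsideStructure

variable {G : Type*} [Group G] (Γ : GarsideStructure G)

/-- the maximal number of nontrivial positive factors in a decomposition of `a`. -/
noncomputable def nu (a : G) : ℕ :=
  sSup {n | ∃ l : List G, (∀ x ∈ l, x ∈ Γ.pos ∧ x ≠ 1) ∧ l.prod = a ∧ l.length = n}

theorem nu_bddAbove {a : G} (ha : a ∈ Γ.pos) :
    BddAbove {n | ∃ l : List G, (∀ x ∈ l, x ∈ Γ.pos ∧ x ≠ 1) ∧ l.prod = a ∧ l.length = n} := by
  obtain ⟨n, hn⟩ := Γ.noetherian a ha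
  exact ⟨n, fun m ⟨l, h1, h2, h3⟩ => h3 ▸ hn l h1 h2⟩

theorem nu_nonempty {a : G} (ha : a ∈ Γ.pos) :
    {n | ∃ l : List G, (∀ x ∈ l, x ∈ Γ.pos ∧ x ≠ 1) ∧ l.prod = a ∧ l.length = n}.Nonempty := by
  by_cases h : a = 1
  · exact ⟨0, [], by simp, by simp [h], rfl⟩
  · exact ⟨1, [a], by simp [ha, h], by simp, rfl⟩

theorem le_nu {a : G} (ha : a ∈ Γ.pos) {l : List G} (h1 : ∀ x ∈ l, x ∈ Γ.pos ∧ x ≠ 1)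
    (h2 : l.prod = a) : l.length ≤ Γ.nu a :=
  le_csSup (Γ.nu_bddAbove ha) ⟨l, h1, h2, rfl⟩

theorem nu_spec {a : G} (ha : a ∈ Γ.pos) :
    ∃ l : List G, (∀ x ∈ l, x ∈ Γ.pos ∧ x ≠ 1) ∧ l.prod = a ∧ l.length = Γ.nu a :=
  Nat.sSup_mem (Γ.nu_nonempty ha) (Γ.nu_bddAbove ha)

theorem nu_add_le {a b : G} (ha : a ∈ Γ.pos) (hb : b ∈ Γ.pos) :
    Γ.nu a + Γ.nu b ≤ Γ.nu (a * b) := by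
  obtain ⟨l, hl1, hl2, hl3⟩ := Γ.nu_spec ha
  obtain ⟨m, hm1, hm2, hm3⟩ := Γ.nu_spec hb
  have := Γ.le_nu (mul_mem ha hb) (l := l ++ m)
    (fun x hx => (List.mem_append.1 hx).elim (hl1 x) (hm1 x))
    (by rw [List.prod_append, hl2, hm2])
  simpa [hl3, hm3] using this

theorem one_le_nu {a : G} (ha : a ∈ Γ.pos) (ha1 : a ≠ 1) : 1 ≤ Γ.nu a :=
  Γ.le_nu ha (l := [a]) (by simpa using ⟨ha, ha1⟩) (by simp)

theorem nu_lt_nu_mul {a b : G} (ha : a ∈ Γ.pos) (hb : b ∈ Γ.pos) (hb1 : b ≠ 1) :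
    Γ.nu a < Γ.nu (a * b) :=
  lt_of_lt_of_le (by have := Γ.one_le_nu hb hb1; omega) (Γ.nu_add_le ha hb)

theorem nu_lt_nu_mul' {a b : G} (ha : a ∈ Γ.pos) (hb : b ∈ Γ.pos) (ha1 : a ≠ 1) :
    Γ.nu b < Γ.nu (a * b) :=
  lt_of_lt_of_le (by have := Γ.one_le_nu ha ha1; omega) (Γ.nu_add_le ha hb)

theorem nu_le_of_ldvd {c a : G} (hc : c ∈ Γ.pos) (ha : a ∈ Γ.pos) (h : c⁻¹ * a ∈ Γ.pos) :
    Γ.nu c ≤ Γ.nu a := by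
  by_cases he : c⁻¹ * a = 1
  · have : c = a := by
      have := he; rw [inv_mul_eq_one] at this; exact this
    rw [this]
  · have := Γ.nu_lt_nu_mul hc h he
    rw [mul_inv_cancel_left] at this
    omega

end GarsideStructure
namespace GarsideStructure

variable {G : Type*} [Group G] (Γ : GarsideStructure G)

theorem exists_gcd {a b : G} (ha : a ∈ Γ.pos) (hb : b ∈ Γ.pos) :
    ∃ d, Γ.IsLeftGcd d a b := by
  classical
  set K := {n | ∃ c, (c ∈ Γ.pos ∧ c⁻¹ * a ∈ Γ.pos ∧ c⁻¹ * b ∈ Γ.pos) ∧ Γ.nu c = n} with hK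
  have hKne : K.Nonempty := ⟨Γ.nu 1, 1, ⟨one_mem _, by simpa using ha, by simpa using hb⟩, rfl⟩
  have hKbdd : BddAbove K := by
    refine ⟨Γ.nu a, fun n ⟨c, ⟨hc, hca, hcb⟩, hn⟩ => ?_⟩
    exact hn ▸ Γ.nu_le_of_ldvd hc ha hca
  obtain ⟨c, ⟨hc, hca, hcb⟩, hnc⟩ := Nat.sSup_mem hKne hKbdd
  refine ⟨c, hc, hca, hcb, fun d hd hda hdb => ?_⟩
  obtain ⟨m, hm, hcm, hdm, hmin⟩ := Γ.lcm_right c hc d hd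
  have hma : m⁻¹ * a ∈ Γ.pos := hmin a ha hca hda
  have hmb : m⁻¹ * b ∈ Γ.pos := hmin b hb hcb hdb
  have hmK : Γ.nu m ∈ K := ⟨m, ⟨hm, hma, hmb⟩, rfl⟩
  have hle : Γ.nu m ≤ Γ.nu c := hnc ▸ le_csSup hKbdd hmK
  have hcm1 : c⁻¹ * m = 1 := by
    by_contra hne
    have := Γ.nu_lt_nu_mul hc hcm hne
    rw [mul_inv_cancel_left] at this
    omega
  have : c = m := by rwa [inv_mul_eq_one] at hcm1
  show Γ.LeftDvd d c
  rw [this]; exact hdm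

/-- left multiplication distributes over gcd:
if `e ≼ u*a` and `e ≼ u*b` then `e ≼ u*(a ∧ b)`. -/
theorem gcd_mul {u a b d e : G} (hu : u ∈ Γ.pos) (ha : a ∈ Γ.pos) (hb : b ∈ Γ.pos)
    (hd : Γ.IsLeftGcd d a b) (he : e ∈ Γ.pos)
    (hea : e⁻¹ * (u * a) ∈ Γ.pos) (heb : e⁻¹ * (u * b) ∈ Γ.pos) :
    e⁻¹ * (u * d) ∈ Γ.pos := by
  obtain ⟨g, hg, hga, hgb, hgmin⟩ := Γ.exists_gcd (mul_mem hu ha) (mul_mem hu hb)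
  have hug : u⁻¹ * g ∈ Γ.pos := by
    refine hgmin u hu ?_ ?_
    · show Γ.LeftDvd u (u*a); simpa [LeftDvd, mul_assoc] using ha
    · show Γ.LeftDvd u (u*b); simpa [LeftDvd, mul_assoc] using hb
  have hfa : (u⁻¹ * g)⁻¹ * a ∈ Γ.pos := by
    have h : (u⁻¹ * g)⁻¹ * a = g⁻¹ * (u * a) := by group
    rw [h]; exact hga
  have hfb : (u⁻¹ * g)⁻¹ * b ∈ Γ.pos := by
    have h : (u⁻¹ * g)⁻¹ * b = g⁻¹ * (u * b) := by group
    rw [h]; exact hgb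
  have hfd : (u⁻¹ * g)⁻¹ * d ∈ Γ.pos := hd.2.2.2 _ hug hfa hfb
  have heg : e⁻¹ * g ∈ Γ.pos := hgmin e he hea heb
  have h : e⁻¹ * (u * d) = (e⁻¹ * g) * ((u⁻¹ * g)⁻¹ * d) := by group
  rw [h]; exact mul_mem heg hfd

theorem exists_simple_dvd_aux : ∀ l : List G,
    (∀ y ∈ l, y ∈ {s : G | s ∈ Γ.pos ∧ s⁻¹ * Γ.Δ ∈ Γ.pos}) → l.prod ≠ 1 →
    ∃ t, Γ.Simple t ∧ t ≠ 1 ∧ t⁻¹ * l.prod ∈ Γ.pos := by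
  intro l
  induction l with
  | nil => intro _ h; simp at h
  | cons s t ih =>
      intro hl hne
      by_cases hs1 : s = 1
      · have hprod : (s :: t).prod = t.prod := by simp [hs1]
        rw [hprod] at hne ⊢
        exact ih (fun y hy => hl y (List.mem_cons_of_mem _ hy)) hne
      · have hsS := hl s List.mem_cons_self
        have htp : t.prod ∈ Γ.pos := by
          rw [← Γ.simples_generate]
          exact Submonoid.list_prod_mem _ (fun y hy =>
            Submonoid.subset_closure (hl y (List.mem_cons_of_mem _ hy)))
        refine ⟨s, ⟨hsS.1, hsS.2⟩, hs1, ?_⟩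
        have h : s⁻¹ * (s :: t).prod = t.prod := by
          rw [List.prod_cons]; group
        rw [h]; exact htp

theorem exists_simple_dvd {x : G} (hx : x ∈ Γ.pos) (hx1 : x ≠ 1) :
    ∃ t, Γ.Simple t ∧ t ≠ 1 ∧ t⁻¹ * x ∈ Γ.pos := by
  rw [← Γ.simples_generate] at hx
  obtain ⟨l, hl, hlp⟩ := Submonoid.exists_list_of_mem_closure hx
  obtain ⟨t, h1, h2, h3⟩ := Γ.exists_simple_dvd_aux l hl (hlp ▸ hx1)
  exact ⟨t, h1, h2, by rwa [hlp] at h3⟩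

/-- every positive element left-divides a power of `Δ`. -/
theorem pos_ldvd_delta_pow {a : G} (ha : a ∈ Γ.pos) :
    ∃ m : ℕ, a⁻¹ * Γ.Δ ^ (m : ℤ) ∈ Γ.pos := by
  rw [← Γ.simples_generate] at ha
  induction ha using Submonoid.closure_induction with
  | mem x hx => exact ⟨1, by simpa using hx.2⟩
  | one => exact ⟨0, by simpa using one_mem _⟩
  | mul x y hx hy ihx ihy =>
      obtain ⟨j, hj⟩ := ihx
      obtain ⟨k, hk⟩ := ihy
      refine ⟨j + k, ?_⟩
      have h : (x * y)⁻¹ * Γ.Δ ^ ((j + k : ℕ) : ℤ)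
          = (y⁻¹ * Γ.Δ ^ (k : ℤ)) * ((Γ.Δ ^ (k : ℤ))⁻¹ * (x⁻¹ * Γ.Δ ^ (j : ℤ)) * Γ.Δ ^ (k : ℤ)) := by
        push_cast
        rw [zpow_add]
        group
      rw [h]
      exact mul_mem hk (Γ.tau_mem (k : ℤ) hj)

end GarsideStructure
namespace GarsideStructure

variable {G : Type*} [Group G] (Γ : GarsideStructure G)

/-- some positive power of `Δ` is central. -/
theorem exists_central_pow : ∃ N : ℕ, 0 < N ∧ ∀ g : G, Γ.Δ ^ N * g = g * Γ.Δ ^ N := by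
  classical
  set S : Set G := {s : G | s ∈ Γ.pos ∧ s⁻¹ * Γ.Δ ∈ Γ.pos} with hS
  haveI : Finite S := Γ.simples_finite.to_subtype
  have hmem : ∀ s : S, Γ.Δ⁻¹ * (s : G) * Γ.Δ ∈ S := by
    intro ⟨s, hs⟩
    have := Γ.conj_delta_simple (s := s) ⟨hs.1, hs.2⟩
    exact ⟨this.1, this.2⟩
  set f : S → S := fun s => ⟨Γ.Δ⁻¹ * (s : G) * Γ.Δ, hmem s⟩ with hf
  have hinj : Function.Injective f := by
    intro x y hxy
    have : Γ.Δ⁻¹ * (x : G) * Γ.Δ = Γ.Δ⁻¹ * (y : G) * Γ.Δ := congrArg Subtype.val hxy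
    ext
    exact mul_left_cancel (mul_right_cancel this)
  -- pigeonhole: some positive iterate of f is the identity
  obtain ⟨i, j, hij, hfij⟩ := Finite.exists_ne_map_eq_of_infinite (fun k : ℕ => f^[k])
  have key : ∃ n : ℕ, 0 < n ∧ ∀ y : S, f^[n] y = y := by
    rcases lt_or_gt_of_ne hij with h | h
    · refine ⟨j - i, by omega, fun y => ?_⟩
      have h2 : f^[i] (f^[j - i] y) = f^[i] y := by
        rw [← Function.iterate_add_apply]
        have : i + (j - i) = j := by omega
        rw [this, hfij]
      exact hinj.iterate i h2
    · refine ⟨i - j, by omega, fun y => ?_⟩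
      have h2 : f^[j] (f^[i - j] y) = f^[j] y := by
        rw [← Function.iterate_add_apply]
        have : j + (i - j) = i := by omega
        rw [this, ← hfij]
      exact hinj.iterate j h2
  obtain ⟨n, hn, hfix⟩ := key
  -- iterate formula
  have hiter : ∀ (k : ℕ) (y : S), (f^[k] y : G) = (Γ.Δ ^ k)⁻¹ * (y : G) * Γ.Δ ^ k := by
    intro k
    induction k with
    | zero => intro y; simp
    | succ k ih =>
        intro y
        rw [Function.iterate_succ_apply', hf]
        show Γ.Δ⁻¹ * ((f^[k] y : S) : G) * Γ.Δ = _
        rw [ih y, pow_succ]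
        group
  -- Δ^n commutes with every simple
  have hsimp : ∀ s ∈ S, Γ.Δ ^ n * s = s * Γ.Δ ^ n := by
    intro s hs
    have := congrArg Subtype.val (hfix ⟨s, hs⟩)
    rw [hiter n ⟨s, hs⟩] at this
    simp only at this
    calc Γ.Δ ^ n * s = Γ.Δ ^ n * ((Γ.Δ ^ n)⁻¹ * s * Γ.Δ ^ n) := by rw [this]
    _ = s * Γ.Δ ^ n := by group
  -- Δ^n commutes with every positive element
  have hposc : ∀ u ∈ Γ.pos, Γ.Δ ^ n * u = u * Γ.Δ ^ n := by
    intro u hu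
    rw [← Γ.simples_generate] at hu
    induction hu using Submonoid.closure_induction with
    | mem x hx => exact hsimp x hx
    | one => simp
    | mul x y hx hy ihx ihy => rw [← mul_assoc, ihx, mul_assoc, ihy, mul_assoc]
  refine ⟨n, hn, fun g => ?_⟩
  obtain ⟨α, hα, β, hβ, hg⟩ := Γ.fractions g
  have hcα := hposc α hα
  have hcβ := hposc β hβ
  have hcαi : Γ.Δ ^ n * α⁻¹ = α⁻¹ * Γ.Δ ^ n := by
    calc Γ.Δ ^ n * α⁻¹ = α⁻¹ * (α * Γ.Δ ^ n) * α⁻¹ := by group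
    _ = α⁻¹ * (Γ.Δ ^ n * α) * α⁻¹ := by rw [hcα]
    _ = α⁻¹ * Γ.Δ ^ n := by group
  rw [hg, ← mul_assoc, hcαi, mul_assoc, hcβ, mul_assoc]

end GarsideStructure
namespace GarsideStructure

variable {G : Type*} [Group G] (Γ : GarsideStructure G)

/-- `τ^M` transports a gcd with `Δ` to a gcd with `Δ`. -/
theorem gcd_tau {s x : G} (h : Γ.IsLeftGcd s x Γ.Δ) (M : ℤ) :
    Γ.IsLeftGcd ((Γ.Δ ^ M)⁻¹ * s * Γ.Δ ^ M) ((Γ.Δ ^ M)⁻¹ * x * Γ.Δ ^ M) Γ.Δ := by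
  obtain ⟨hsp, hsx, hsd, hmin⟩ := h
  have hcomm : Γ.Δ * Γ.Δ ^ M = Γ.Δ ^ M * Γ.Δ := by
    rw [← zpow_one_add, ← zpow_add_one]; ring_nf
  refine ⟨Γ.tau_mem M hsp, ?_, ?_, ?_⟩
  · show ((Γ.Δ ^ M)⁻¹ * s * Γ.Δ ^ M)⁻¹ * ((Γ.Δ ^ M)⁻¹ * x * Γ.Δ ^ M) ∈ Γ.pos
    have he : ((Γ.Δ ^ M)⁻¹ * s * Γ.Δ ^ M)⁻¹ * ((Γ.Δ ^ M)⁻¹ * x * Γ.Δ ^ M)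
        = (Γ.Δ ^ M)⁻¹ * (s⁻¹ * x) * Γ.Δ ^ M := by group
    rw [he]; exact Γ.tau_mem M hsx
  · show ((Γ.Δ ^ M)⁻¹ * s * Γ.Δ ^ M)⁻¹ * Γ.Δ ∈ Γ.pos
    have he : ((Γ.Δ ^ M)⁻¹ * s * Γ.Δ ^ M)⁻¹ * Γ.Δ
        = (Γ.Δ ^ M)⁻¹ * (s⁻¹ * (Γ.Δ ^ M * Γ.Δ * (Γ.Δ ^ M)⁻¹)) * Γ.Δ ^ M := by group
    rw [he, ← hcomm]
    have he2 : Γ.Δ * Γ.Δ ^ M * (Γ.Δ ^ M)⁻¹ = Γ.Δ := by group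
    rw [he2]
    exact Γ.tau_mem M hsd
  · intro c hc hcx hcd
    set c' := Γ.Δ ^ M * c * (Γ.Δ ^ M)⁻¹ with hc'
    have hc'p : c' ∈ Γ.pos := by
      have he : c' = (Γ.Δ ^ (-M))⁻¹ * c * Γ.Δ ^ (-M) := by rw [hc', zpow_neg]; group
      rw [he]; exact Γ.tau_mem (-M) hc
    have hc'x : Γ.LeftDvd c' x := by
      show c'⁻¹ * x ∈ Γ.pos
      have he : c'⁻¹ * x
          = (Γ.Δ ^ (-M))⁻¹ * (c⁻¹ * ((Γ.Δ ^ M)⁻¹ * x * Γ.Δ ^ M)) * Γ.Δ ^ (-M) := by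
        rw [hc', zpow_neg]; group
      rw [he]; exact Γ.tau_mem (-M) hcx
    have hc'd : Γ.LeftDvd c' Γ.Δ := by
      show c'⁻¹ * Γ.Δ ∈ Γ.pos
      have he : c'⁻¹ * Γ.Δ
          = (Γ.Δ ^ (-M))⁻¹ * (c⁻¹ * ((Γ.Δ ^ M)⁻¹ * Γ.Δ * Γ.Δ ^ M)) * Γ.Δ ^ (-M) := by
        rw [hc', zpow_neg]; group
      have he2 : (Γ.Δ ^ M)⁻¹ * Γ.Δ * Γ.Δ ^ M = Γ.Δ := by
        rw [mul_assoc, hcomm]; group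
      rw [he, he2]; exact Γ.tau_mem (-M) hcd
    have hc's : c'⁻¹ * s ∈ Γ.pos := hmin c' hc'p hc'x hc'd
    show c⁻¹ * ((Γ.Δ ^ M)⁻¹ * s * Γ.Δ ^ M) ∈ Γ.pos
    have he : c⁻¹ * ((Γ.Δ ^ M)⁻¹ * s * Γ.Δ ^ M) = (Γ.Δ ^ M)⁻¹ * (c'⁻¹ * s) * Γ.Δ ^ M := by
      rw [hc']; group
    rw [he]; exact Γ.tau_mem M hc's

/-- the convexity inequality for `inf`:
if `Δ^m ≼ v` and `Δ^m ≼ v^x` for positive `x`, and `s = x ∧ Δ`, then `Δ^m ≼ v^s`. -/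
theorem inf_conj {x s v : G} (hx : x ∈ Γ.pos) (hgcd : Γ.IsLeftGcd s x Γ.Δ) (m : ℤ)
    (hv : (Γ.Δ ^ m)⁻¹ * v ∈ Γ.pos) (hvx : (Γ.Δ ^ m)⁻¹ * (x⁻¹ * v * x) ∈ Γ.pos) :
    (Γ.Δ ^ m)⁻¹ * (s⁻¹ * v * s) ∈ Γ.pos := by
  have hsp := hgcd.1
  have hsx := hgcd.2.1
  have hsd := hgcd.2.2.1
  set u := (Γ.Δ ^ m)⁻¹ * v with hu
  set e := (Γ.Δ ^ m)⁻¹ * s * Γ.Δ ^ m with he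
  have hep : e ∈ Γ.pos := Γ.tau_mem m hsp
  have hea : e⁻¹ * (u * x) ∈ Γ.pos := by
    have h1 : e⁻¹ * (u * x)
        = ((Γ.Δ ^ m)⁻¹ * (s⁻¹ * x) * Γ.Δ ^ m) * ((Γ.Δ ^ m)⁻¹ * (x⁻¹ * v * x)) := by
      rw [he, hu]; group
    rw [h1]; exact mul_mem (Γ.tau_mem m hsx) hvx
  have heb : e⁻¹ * (u * Γ.Δ) ∈ Γ.pos := by
    have h1 : e⁻¹ * (u * Γ.Δ)
        = ((Γ.Δ ^ m)⁻¹ * (s⁻¹ * Γ.Δ) * Γ.Δ ^ m) * (Γ.Δ⁻¹ * ((Γ.Δ ^ m)⁻¹ * v) * Γ.Δ) := by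
      rw [he, hu]; group
    rw [h1]; exact mul_mem (Γ.tau_mem m hsd) (Γ.conj_delta_mem hv)
  have := Γ.gcd_mul hv hx Γ.delta_mem hgcd hep hea heb
  have h2 : (Γ.Δ ^ m)⁻¹ * (s⁻¹ * v * s) = e⁻¹ * (u * s) := by rw [he, hu]; group
  rw [h2]; exact this

end GarsideStructure
namespace GarsideStructure

variable {G : Type*} [Group G] (Γ : GarsideStructure G)

/-- the convexity inequality for `sup`:
if `v ≼ Δ^M` and `v^x ≼ Δ^M` for positive `x`, and `s = x ∧ Δ`, then `v^s ≼ Δ^M`. -/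
theorem sup_conj {x s v : G} (hx : x ∈ Γ.pos) (hgcd : Γ.IsLeftGcd s x Γ.Δ) (M : ℤ)
    (hv : v⁻¹ * Γ.Δ ^ M ∈ Γ.pos) (hvx : (x⁻¹ * v * x)⁻¹ * Γ.Δ ^ M ∈ Γ.pos) :
    (s⁻¹ * v * s)⁻¹ * Γ.Δ ^ M ∈ Γ.pos := by
  have hsp := hgcd.1
  have hsx := hgcd.2.1
  have hsd := hgcd.2.2.1
  have hgcd' := Γ.gcd_tau hgcd M
  have hea : s⁻¹ * ((v⁻¹ * Γ.Δ ^ M) * ((Γ.Δ ^ M)⁻¹ * x * Γ.Δ ^ M)) ∈ Γ.pos := by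
    have h1 : s⁻¹ * ((v⁻¹ * Γ.Δ ^ M) * ((Γ.Δ ^ M)⁻¹ * x * Γ.Δ ^ M))
        = (s⁻¹ * x) * ((x⁻¹ * v * x)⁻¹ * Γ.Δ ^ M) := by group
    rw [h1]; exact mul_mem hsx hvx
  have heb : s⁻¹ * ((v⁻¹ * Γ.Δ ^ M) * Γ.Δ) ∈ Γ.pos := by
    have h1 : s⁻¹ * ((v⁻¹ * Γ.Δ ^ M) * Γ.Δ)
        = (s⁻¹ * Γ.Δ) * (Γ.Δ⁻¹ * (v⁻¹ * Γ.Δ ^ M) * Γ.Δ) := by group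
    rw [h1]; exact mul_mem hsd (Γ.conj_delta_mem hv)
  have := Γ.gcd_mul hv (Γ.tau_mem M hx) Γ.delta_mem hgcd' hsp hea heb
  have h2 : (s⁻¹ * v * s)⁻¹ * Γ.Δ ^ M
      = s⁻¹ * ((v⁻¹ * Γ.Δ ^ M) * ((Γ.Δ ^ M)⁻¹ * s * Γ.Δ ^ M)) := by group
  rw [h2]; exact this

/-- reachability: conjugating by a positive element, staying in the interval,
can be realized by successive simple conjugations staying in the interval. -/
theorem reach {r : ℕ} (p q : Fin r → ℤ) (W : Set (Fin r → G))
    (hW1 : W ⊆ {v | Γ.InInterval p q v})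
    (hW3 : ∀ v ∈ W, ∀ s : G, Γ.Simple s →
      Γ.InInterval p q (fun i => s⁻¹ * v i * s) → (fun i => s⁻¹ * v i * s) ∈ W) :
    ∀ n : ℕ, ∀ x ∈ Γ.pos, Γ.nu x ≤ n → ∀ v ∈ W,
      Γ.InInterval p q (fun i => x⁻¹ * v i * x) → (fun i => x⁻¹ * v i * x) ∈ W := by
  intro n
  induction n with
  | zero =>
      intro x hx hnu v hv _
      have hx1 : x = 1 := by
        by_contra h
        have := Γ.one_le_nu hx h
        omega
      subst hx1
      have h : (fun i => (1 : G)⁻¹ * v i * 1) = v := by funext i; simp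
      rw [h]; exact hv
  | succ n ih =>
      intro x hx hnu v hv hint
      by_cases hx1 : x = 1
      · subst hx1
        have h : (fun i => (1 : G)⁻¹ * v i * 1) = v := by funext i; simp
        rw [h]; exact hv
      · obtain ⟨d, hgcd⟩ := Γ.exists_gcd hx Γ.delta_mem
        obtain ⟨t, hts, ht1, htx⟩ := Γ.exists_simple_dvd hx hx1
        have htd : Γ.LeftDvd t d := hgcd.2.2.2 t hts.1 htx hts.2
        have hd1 : d ≠ 1 := by
          intro h
          exact ht1 (Γ.eq_one_of_mem_of_inv_mem hts.1 (by simpa [h, LeftDvd] using htd))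
        have hvint : Γ.InInterval p q v := hW1 hv
        have hsd : Γ.Simple d := ⟨hgcd.1, hgcd.2.2.1⟩
        have hconv : Γ.InInterval p q (fun i => d⁻¹ * v i * d) := by
          intro i
          refine ⟨Γ.inf_conj hx hgcd (p i) (hvint i).1 ((hint i).1), ?_⟩
          exact Γ.sup_conj hx hgcd (q i) (hvint i).2 ((hint i).2)
        have hdW : (fun i => d⁻¹ * v i * d) ∈ W := hW3 v hv d hsd hconv
        have hx' : d⁻¹ * x ∈ Γ.pos := hgcd.2.1
        have hnux' : Γ.nu (d⁻¹ * x) ≤ n := by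
          have h2 := Γ.nu_lt_nu_mul' hgcd.1 hx' hd1
          rw [mul_inv_cancel_left] at h2
          omega
        have hkey : (fun i => (d⁻¹ * x)⁻¹ * ((fun i => d⁻¹ * v i * d) i) * (d⁻¹ * x))
            = (fun i => x⁻¹ * v i * x) := by
          funext i
          show (d⁻¹ * x)⁻¹ * (d⁻¹ * v i * d) * (d⁻¹ * x) = _
          group
        have := ih (d⁻¹ * x) hx' hnux' _ hdW (by rw [hkey]; exact hint)
        rw [hkey] at this
        exact this

end GarsideStructure

/-- Correctness of the basic algorithm solving the SCP in Garside groups: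
for `a, c ∈ [p,q]`, the tuples `a` and `c` are conjugate if and only if `c` belongs
to the smallest subset `W` of `[p,q]` containing `a` that is closed under
conjugation by simple elements that stays in `[p,q]`. -/
theorem scp_algorithm_correct {G : Type*} [Group G] (Γ : GarsideStructure G)
    (r : ℕ) (p q : Fin r → ℤ) (a c : Fin r → G)
    (ha : Γ.InInterval p q a) (hc : Γ.InInterval p q c) :
    (∃ x : G, ∀ i, x⁻¹ * a i * x = c i) ↔
      ∀ W : Set (Fin r → G),
        W ⊆ {v | Γ.InInterval p q v} →
        a ∈ W →
        (∀ v ∈ W, ∀ s : G, Γ.Simple s →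
          Γ.InInterval p q (fun i => s⁻¹ * v i * s) →
          (fun i => s⁻¹ * v i * s) ∈ W) →
        c ∈ W := by
  constructor
  · rintro ⟨x, hx⟩ W hW1 haW hW3
    obtain ⟨N, hN, hcen⟩ := Γ.exists_central_pow
    obtain ⟨α, hα, β, hβ, hg⟩ := Γ.fractions x
    obtain ⟨m, hm⟩ := Γ.pos_ldvd_delta_pow hα
    rw [zpow_natCast] at hm
    set z := x * Γ.Δ ^ (m * N) with hzdef
    have hcom : ∀ g : G, Γ.Δ ^ (m * N) * g = g * Γ.Δ ^ (m * N) := by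
      intro g
      have h1 : Commute (Γ.Δ ^ N) g := hcen g
      have h2 : Commute (Γ.Δ ^ (m * N)) g := by
        rw [mul_comm m N, pow_mul]
        exact h1.pow_left m
      exact h2
    obtain ⟨K, hK⟩ : ∃ K, N = K + 1 := ⟨N - 1, by omega⟩
    have hmn : m * N = m + m * K := by subst hK; ring
    have hz : z ∈ Γ.pos := by
      have h1 : β * Γ.Δ ^ (m * N) = Γ.Δ ^ (m * N) * β := (hcom β).symm
      have h2 : z = α⁻¹ * Γ.Δ ^ (m * N) * β := by
        rw [hzdef, hg, mul_assoc, h1, ← mul_assoc]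
      rw [h2, hmn, pow_add, ← mul_assoc]
      exact mul_mem (mul_mem hm (pow_mem Γ.delta_mem _)) hβ
    have hazc : ∀ i, z⁻¹ * a i * z = c i := by
      intro i
      rw [hzdef]
      have e1 : (x * Γ.Δ ^ (m * N))⁻¹ * a i * (x * Γ.Δ ^ (m * N))
          = (Γ.Δ ^ (m * N))⁻¹ * (x⁻¹ * a i * x) * Γ.Δ ^ (m * N) := by group
      rw [e1, hx i, mul_assoc, ← hcom (c i), inv_mul_cancel_left]
    have htup : (fun i => z⁻¹ * a i * z) = c := funext hazc
    have hfin := Γ.reach p q W hW1 hW3 (Γ.nu z) z hz le_rfl a haW (by rw [htup]; exact hc)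
    rw [htup] at hfin
    exact hfin
  · intro h
    have := h {v | Γ.InInterval p q v ∧ ∃ y : G, ∀ i, y⁻¹ * a i * y = v i}
      (fun v hv => hv.1)
      ⟨ha, 1, by intro i; simp⟩
      (by
        intro v hv s hs hint
        obtain ⟨hvi, y, hy⟩ := hv
        refine ⟨hint, y * s, fun i => ?_⟩
        show (y * s)⁻¹ * a i * (y * s) = s⁻¹ * v i * s
        rw [← hy i]; group)
    exact this.2
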